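/- Let Gamma be a homogeneous model monomial weight in C^2 ((m,0),(0,n) in Gamma, all points on the segment n*alpha + m*beta = nm, m,n >= 1, non-decoupled), and let sigma, tau be the extremal ratios: sigma = max alpha/beta and tau = max beta/alpha over (alpha,beta) in Gamma with alpha,beta != 0. Let lambda_Gamma(z,w) denote the minimal eigenvalue of the complex Hessian of phi_Gamma. Then there is a constant c > 0 such that lambda_Gamma(z,w) >= c*(|z|^{2 sigma} + |w|^{2 tau}) for all (z,w) in the region E := {|z| >= 1 and |w| >= |z|^{-sigma}} union {|w| >= 1 and |z| >= |w|^{-tau}}. -/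

import Mathlib

/-- Wirtinger derivative `∂/∂z` (first coordinate) of a function on `ℂ²`. -/
noncomputable def dz (f : ℂ × ℂ → ℂ) (p : ℂ × ℂ) : ℂ :=
  (1 / 2) * (fderiv ℝ f p (1, 0) - Complex.I * fderiv ℝ f p (Complex.I, 0))

/-- Wirtinger derivative `∂/∂z̄` (first coordinate). -/
noncomputable def dzbar (f : ℂ × ℂ → ℂ) (p : ℂ × ℂ) : ℂ :=
  (1 / 2) * (fderiv ℝ f p (1, 0) + Complex.I * fderiv ℝ f p (Complex.I, 0))

/-- Wirtinger derivative `∂/∂w` (second coordinate). -/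
noncomputable def dw (f : ℂ × ℂ → ℂ) (p : ℂ × ℂ) : ℂ :=
  (1 / 2) * (fderiv ℝ f p (0, 1) - Complex.I * fderiv ℝ f p (0, Complex.I))

/-- Wirtinger derivative `∂/∂w̄` (second coordinate). -/
noncomputable def dwbar (f : ℂ × ℂ → ℂ) (p : ℂ × ℂ) : ℂ :=
  (1 / 2) * (fderiv ℝ f p (0, 1) + Complex.I * fderiv ℝ f p (0, Complex.I))

/-- The model monomial weight `φ_Γ(z,w) = ∑_{(α,β)∈Γ} |z|^{2α} |w|^{2β}`. -/
noncomputable def phiGamma (Γ : Finset (ℕ × ℕ)) (p : ℂ × ℂ) : ℝ :=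
  ∑ q ∈ Γ, ‖p.1‖ ^ (2 * q.1) * ‖p.2‖ ^ (2 * q.2)

/-- `Γ⁽¹⁾ = {(α,β)+(γ,δ) : (α,β),(γ,δ) ∈ Γ linearly independent} - (1,1)`. -/
def GammaOne (Γ : Finset (ℕ × ℕ)) : Finset (ℕ × ℕ) :=
  ((Γ ×ˢ Γ).filter (fun q => q.1.1 * q.2.2 ≠ q.1.2 * q.2.1)).image
    (fun q => (q.1.1 + q.2.1 - 1, q.1.2 + q.2.2 - 1))

/-- `Γ⁽²⁾ = (Γ_r - (1,0)) ∪ (Γ_u - (0,1))`. -/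
def GammaTwo (Γ : Finset (ℕ × ℕ)) : Finset (ℕ × ℕ) :=
  (Γ.filter (fun q => q.1 ≠ 0)).image (fun q => (q.1 - 1, q.2)) ∪
    (Γ.filter (fun q => q.2 ≠ 0)).image (fun q => (q.1, q.2 - 1))

/-- The determinant of the complex Hessian of `φ_Γ` (a real number). -/
noncomputable def detHessian (Γ : Finset (ℕ × ℕ)) (p : ℂ × ℂ) : ℝ :=
  letI φC : ℂ × ℂ → ℂ := fun q => (phiGamma Γ q : ℂ)
  (dz (dzbar φC) p * dw (dwbar φC) p - dz (dwbar φC) p * dw (dzbar φC) p).re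

/-- The trace of the complex Hessian of `φ_Γ` (a real number). -/
noncomputable def trHessian (Γ : Finset (ℕ × ℕ)) (p : ℂ × ℂ) : ℝ :=
  letI φC : ℂ × ℂ → ℂ := fun q => (phiGamma Γ q : ℂ)
  (dz (dzbar φC) p + dw (dwbar φC) p).re

/-- The value of the Hermitian form of the complex Hessian of `φ_Γ` at `p` on the
vector `v`, i.e. `(H_{φ_Γ}(p) v, v) = ∑_{j,k} ∂²φ/∂z_j∂z̄_k v_j v̄_k`. -/
noncomputable def hessForm (Γ : Finset (ℕ × ℕ)) (p : ℂ × ℂ) (v : ℂ × ℂ) : ℝ :=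
  letI φC : ℂ × ℂ → ℂ := fun q => (phiGamma Γ q : ℂ)
  (dz (dzbar φC) p * v.1 * (starRingEnd ℂ) v.1
    + dz (dwbar φC) p * v.1 * (starRingEnd ℂ) v.2
    + dw (dzbar φC) p * v.2 * (starRingEnd ℂ) v.1
    + dw (dwbar φC) p * v.2 * (starRingEnd ℂ) v.2).re

/-- The least eigenvalue `λ_Γ` of the complex Hessian of `φ_Γ`, as the infimum of the
Rayleigh quotient. -/
noncomputable def lamGamma (Γ : Finset (ℕ × ℕ)) (p : ℂ × ℂ) : ℝ :=
  sInf {r : ℝ | ∃ v : ℂ × ℂ, v ≠ 0 ∧ r = hessForm Γ p v / (‖v.1‖ ^ 2 + ‖v.2‖ ^ 2)}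

open Complex Finset

noncomputable def fstL : ℂ × ℂ →L[ℝ] ℂ := ContinuousLinearMap.fst ℝ ℂ ℂ
noncomputable def sndL : ℂ × ℂ →L[ℝ] ℂ := ContinuousLinearMap.snd ℝ ℂ ℂ
noncomputable def conjL : ℂ →L[ℝ] ℂ := Complex.conjCLE.toContinuousLinearMap
noncomputable def wirt (A B C D : ℂ) : ℂ × ℂ →L[ℝ] ℂ :=
  A • fstL + B • conjL.comp fstL + C • sndL + D • conjL.comp sndL
@[simp] lemma conjL_apply (x : ℂ) : conjL x = (starRingEnd ℂ) x := rfl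
@[simp] lemma wirt_apply (A B C D : ℂ) (v : ℂ × ℂ) :
    wirt A B C D v = A * v.1 + B * (starRingEnd ℂ) v.1 + C * v.2 + D * (starRingEnd ℂ) v.2 := by
  simp [wirt, fstL, sndL, smul_eq_mul]
lemma wirt_sum {α : Type*} (s : Finset α) (A B C D : α → ℂ) :
    ∑ q ∈ s, wirt (A q) (B q) (C q) (D q) =
      wirt (∑ q ∈ s, A q) (∑ q ∈ s, B q) (∑ q ∈ s, C q) (∑ q ∈ s, D q) := by
  refine ContinuousLinearMap.ext fun v => ?_
  simp [ContinuousLinearMap.sum_apply, Finset.sum_mul, Finset.sum_add_distrib]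
lemma wirt_smul (c A B C D : ℂ) : c • wirt A B C D = wirt (c*A) (c*B) (c*C) (c*D) := by
  refine ContinuousLinearMap.ext fun v => ?_
  simp [smul_eq_mul]; ring

lemma dz_of_wirt {f : ℂ × ℂ → ℂ} {A B C D : ℂ} {p : ℂ × ℂ}
    (h : HasFDerivAt f (wirt A B C D) p) : dz f p = A := by
  rw [dz, h.fderiv]; simp; ring_nf; simp [Complex.I_sq]; ring
lemma dzbar_of_wirt {f : ℂ × ℂ → ℂ} {A B C D : ℂ} {p : ℂ × ℂ}
    (h : HasFDerivAt f (wirt A B C D) p) : dzbar f p = B := by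
  rw [dzbar, h.fderiv]; simp; ring_nf; simp [Complex.I_sq]; ring
lemma dw_of_wirt {f : ℂ × ℂ → ℂ} {A B C D : ℂ} {p : ℂ × ℂ}
    (h : HasFDerivAt f (wirt A B C D) p) : dw f p = C := by
  rw [dw, h.fderiv]; simp; ring_nf; simp [Complex.I_sq]; ring
lemma dwbar_of_wirt {f : ℂ × ℂ → ℂ} {A B C D : ℂ} {p : ℂ × ℂ}
    (h : HasFDerivAt f (wirt A B C D) p) : dwbar f p = D := by
  rw [dwbar, h.fderiv]; simp; ring_nf; simp [Complex.I_sq]; ring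

lemma hasFDerivAt_mono (i j k l : ℕ) (p : ℂ × ℂ) :
    HasFDerivAt (fun p : ℂ × ℂ => p.1 ^ i * (starRingEnd ℂ) p.1 ^ j * p.2 ^ k * (starRingEnd ℂ) p.2 ^ l)
      (wirt ((i : ℂ) * p.1 ^ (i - 1) * (starRingEnd ℂ) p.1 ^ j * p.2 ^ k * (starRingEnd ℂ) p.2 ^ l)
            ((j : ℂ) * p.1 ^ i * (starRingEnd ℂ) p.1 ^ (j - 1) * p.2 ^ k * (starRingEnd ℂ) p.2 ^ l)
            ((k : ℂ) * p.1 ^ i * (starRingEnd ℂ) p.1 ^ j * p.2 ^ (k - 1) * (starRingEnd ℂ) p.2 ^ l)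
            ((l : ℂ) * p.1 ^ i * (starRingEnd ℂ) p.1 ^ j * p.2 ^ k * (starRingEnd ℂ) p.2 ^ (l - 1))) p := by
  have h1 : HasFDerivAt (fun p : ℂ × ℂ => p.1 ^ i) _ p :=
    ((hasDerivAt_pow i p.1).hasFDerivAt.restrictScalars ℝ).comp p hasFDerivAt_fst
  have hc1 : HasFDerivAt (fun p : ℂ × ℂ => (starRingEnd ℂ) p.1) (conjL.comp fstL) p :=
    (conjL.hasFDerivAt).comp p hasFDerivAt_fst
  have h2 : HasFDerivAt (fun p : ℂ × ℂ => (starRingEnd ℂ) p.1 ^ j) _ p :=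
    ((hasDerivAt_pow j ((starRingEnd ℂ) p.1)).hasFDerivAt.restrictScalars ℝ).comp p hc1
  have h3 : HasFDerivAt (fun p : ℂ × ℂ => p.2 ^ k) _ p :=
    ((hasDerivAt_pow k p.2).hasFDerivAt.restrictScalars ℝ).comp p hasFDerivAt_snd
  have hc2 : HasFDerivAt (fun p : ℂ × ℂ => (starRingEnd ℂ) p.2) (conjL.comp sndL) p :=
    (conjL.hasFDerivAt).comp p hasFDerivAt_snd
  have h4 : HasFDerivAt (fun p : ℂ × ℂ => (starRingEnd ℂ) p.2 ^ l) _ p :=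
    ((hasDerivAt_pow l ((starRingEnd ℂ) p.2)).hasFDerivAt.restrictScalars ℝ).comp p hc2
  have H := ((h1.fun_mul h2).fun_mul h3).fun_mul h4
  refine H.congr_fderiv ?_
  refine ContinuousLinearMap.ext fun v => ?_
  simp [fstL, sndL, smul_eq_mul]
  ring

noncomputable def phiC (Γ : Finset (ℕ × ℕ)) : ℂ × ℂ → ℂ := fun p =>
  ∑ q ∈ Γ, p.1 ^ q.1 * (starRingEnd ℂ) p.1 ^ q.1 * p.2 ^ q.2 * (starRingEnd ℂ) p.2 ^ q.2
noncomputable def psi1 (Γ : Finset (ℕ × ℕ)) : ℂ × ℂ → ℂ := fun p =>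
  ∑ q ∈ Γ, (q.1 : ℂ) * p.1 ^ q.1 * (starRingEnd ℂ) p.1 ^ (q.1 - 1) * p.2 ^ q.2 * (starRingEnd ℂ) p.2 ^ q.2
noncomputable def psi2 (Γ : Finset (ℕ × ℕ)) : ℂ × ℂ → ℂ := fun p =>
  ∑ q ∈ Γ, (q.2 : ℂ) * p.1 ^ q.1 * (starRingEnd ℂ) p.1 ^ q.1 * p.2 ^ q.2 * (starRingEnd ℂ) p.2 ^ (q.2 - 1)

lemma norm_pow_two_mul (a : ℕ) (x : ℂ) :
    ((‖x‖ ^ (2 * a) : ℝ) : ℂ) = x ^ a * (starRingEnd ℂ) x ^ a := by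
  rw [← mul_pow, Complex.mul_conj, pow_mul]
  push_cast
  rw [Complex.normSq_eq_norm_sq]
  norm_cast

lemma phiC_eq (Γ : Finset (ℕ × ℕ)) :
    (fun p : ℂ × ℂ => ((phiGamma Γ p : ℝ) : ℂ)) = phiC Γ := by
  funext p
  simp only [phiGamma, phiC, Complex.ofReal_sum, Complex.ofReal_mul]
  refine Finset.sum_congr rfl fun q _ => ?_
  rw [norm_pow_two_mul, norm_pow_two_mul]; ring

lemma hasFDerivAt_phiC (Γ : Finset (ℕ × ℕ)) (p : ℂ × ℂ) :
    HasFDerivAt (phiC Γ)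
      (wirt (∑ q ∈ Γ, (q.1 : ℂ) * p.1 ^ (q.1 - 1) * (starRingEnd ℂ) p.1 ^ q.1 * p.2 ^ q.2 * (starRingEnd ℂ) p.2 ^ q.2)
            (psi1 Γ p)
            (∑ q ∈ Γ, (q.2 : ℂ) * p.1 ^ q.1 * (starRingEnd ℂ) p.1 ^ q.1 * p.2 ^ (q.2 - 1) * (starRingEnd ℂ) p.2 ^ q.2)
            (psi2 Γ p)) p := by
  have := HasFDerivAt.fun_sum (u := Γ)
    (A := fun q (p : ℂ × ℂ) => p.1 ^ q.1 * (starRingEnd ℂ) p.1 ^ q.1 * p.2 ^ q.2 * (starRingEnd ℂ) p.2 ^ q.2)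
    (fun q _ => hasFDerivAt_mono q.1 q.1 q.2 q.2 p)
  rw [wirt_sum] at this
  exact this

lemma dzbar_phiC (Γ : Finset (ℕ × ℕ)) : dzbar (phiC Γ) = psi1 Γ :=
  funext fun p => dzbar_of_wirt (hasFDerivAt_phiC Γ p)
lemma dwbar_phiC (Γ : Finset (ℕ × ℕ)) : dwbar (phiC Γ) = psi2 Γ :=
  funext fun p => dwbar_of_wirt (hasFDerivAt_phiC Γ p)

lemma hasFDerivAt_psi1 (Γ : Finset (ℕ × ℕ)) (p : ℂ × ℂ) :
    HasFDerivAt (psi1 Γ)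
      (wirt (∑ q ∈ Γ, (q.1 : ℂ) * ((q.1 : ℂ) * p.1 ^ (q.1 - 1) * (starRingEnd ℂ) p.1 ^ (q.1 - 1) * p.2 ^ q.2 * (starRingEnd ℂ) p.2 ^ q.2))
            (∑ q ∈ Γ, (q.1 : ℂ) * (((q.1 - 1 : ℕ) : ℂ) * p.1 ^ q.1 * (starRingEnd ℂ) p.1 ^ (q.1 - 1 - 1) * p.2 ^ q.2 * (starRingEnd ℂ) p.2 ^ q.2))
            (∑ q ∈ Γ, (q.1 : ℂ) * ((q.2 : ℂ) * p.1 ^ q.1 * (starRingEnd ℂ) p.1 ^ (q.1 - 1) * p.2 ^ (q.2 - 1) * (starRingEnd ℂ) p.2 ^ q.2))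
            (∑ q ∈ Γ, (q.1 : ℂ) * ((q.2 : ℂ) * p.1 ^ q.1 * (starRingEnd ℂ) p.1 ^ (q.1 - 1) * p.2 ^ q.2 * (starRingEnd ℂ) p.2 ^ (q.2 - 1)))) p := by
  have := HasFDerivAt.fun_sum (u := Γ)
    (A := fun q (p : ℂ × ℂ) => (q.1 : ℂ) * (p.1 ^ q.1 * (starRingEnd ℂ) p.1 ^ (q.1 - 1) * p.2 ^ q.2 * (starRingEnd ℂ) p.2 ^ q.2))
    (fun q _ => (hasFDerivAt_mono q.1 (q.1 - 1) q.2 q.2 p).const_mul (q.1 : ℂ))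
  simp only [wirt_smul] at this
  rw [wirt_sum] at this
  have e : (fun p : ℂ × ℂ => ∑ q ∈ Γ, (q.1 : ℂ) * (p.1 ^ q.1 * (starRingEnd ℂ) p.1 ^ (q.1 - 1) * p.2 ^ q.2 * (starRingEnd ℂ) p.2 ^ q.2)) = psi1 Γ := by
    funext p; exact Finset.sum_congr rfl fun q _ => by ring
  rw [e] at this
  convert this using 2
lemma hasFDerivAt_psi2 (Γ : Finset (ℕ × ℕ)) (p : ℂ × ℂ) :
    HasFDerivAt (psi2 Γ)
      (wirt (∑ q ∈ Γ, (q.2 : ℂ) * ((q.1 : ℂ) * p.1 ^ (q.1 - 1) * (starRingEnd ℂ) p.1 ^ q.1 * p.2 ^ q.2 * (starRingEnd ℂ) p.2 ^ (q.2 - 1)))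
            (∑ q ∈ Γ, (q.2 : ℂ) * ((q.1 : ℂ) * p.1 ^ q.1 * (starRingEnd ℂ) p.1 ^ (q.1 - 1) * p.2 ^ q.2 * (starRingEnd ℂ) p.2 ^ (q.2 - 1)))
            (∑ q ∈ Γ, (q.2 : ℂ) * ((q.2 : ℂ) * p.1 ^ q.1 * (starRingEnd ℂ) p.1 ^ q.1 * p.2 ^ (q.2 - 1) * (starRingEnd ℂ) p.2 ^ (q.2 - 1)))
            (∑ q ∈ Γ, (q.2 : ℂ) * (((q.2 - 1 : ℕ) : ℂ) * p.1 ^ q.1 * (starRingEnd ℂ) p.1 ^ q.1 * p.2 ^ q.2 * (starRingEnd ℂ) p.2 ^ (q.2 - 1 - 1)))) p := by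
  have := HasFDerivAt.fun_sum (u := Γ)
    (A := fun q (p : ℂ × ℂ) => (q.2 : ℂ) * (p.1 ^ q.1 * (starRingEnd ℂ) p.1 ^ q.1 * p.2 ^ q.2 * (starRingEnd ℂ) p.2 ^ (q.2 - 1)))
    (fun q _ => (hasFDerivAt_mono q.1 q.1 q.2 (q.2 - 1) p).const_mul (q.2 : ℂ))
  simp only [wirt_smul] at this
  rw [wirt_sum] at this
  have e : (fun p : ℂ × ℂ => ∑ q ∈ Γ, (q.2 : ℂ) * (p.1 ^ q.1 * (starRingEnd ℂ) p.1 ^ q.1 * p.2 ^ q.2 * (starRingEnd ℂ) p.2 ^ (q.2 - 1))) = psi2 Γ := by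
    funext p; exact Finset.sum_congr rfl fun q _ => by ring
  rw [e] at this
  convert this using 2

lemma term_eq (a b : ℕ) (z w v1 v2 : ℂ) (hz : z ≠ 0) (hw : w ≠ 0) :
    (((a:ℂ) * ((a:ℂ) * z^(a-1) * (starRingEnd ℂ) z^(a-1) * w^b * (starRingEnd ℂ) w^b)) * v1 * (starRingEnd ℂ) v1
     + ((b:ℂ) * ((a:ℂ) * z^(a-1) * (starRingEnd ℂ) z^a * w^b * (starRingEnd ℂ) w^(b-1))) * v1 * (starRingEnd ℂ) v2
     + ((a:ℂ) * ((b:ℂ) * z^a * (starRingEnd ℂ) z^(a-1) * w^(b-1) * (starRingEnd ℂ) w^b)) * v2 * (starRingEnd ℂ) v1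
     + ((b:ℂ) * ((b:ℂ) * z^a * (starRingEnd ℂ) z^a * w^(b-1) * (starRingEnd ℂ) w^(b-1))) * v2 * (starRingEnd ℂ) v2).re
    = (‖z‖^(2*a) * ‖w‖^(2*b) / (‖z‖^2*‖w‖^2)) * ‖(a:ℂ)*w*v1 + (b:ℂ)*z*v2‖^2 := by
  have hzc : (starRingEnd ℂ) z ≠ 0 := by simpa using hz
  have hwc : (starRingEnd ℂ) w ≠ 0 := by simpa using hw
  set X := (a:ℂ)*w*v1 + (b:ℂ)*z*v2 with hXdef
  have hRHS : (‖z‖^(2*a) * ‖w‖^(2*b) / (‖z‖^2*‖w‖^2)) * ‖X‖^2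
      = (((‖z‖^(2*a) * ‖w‖^(2*b) / (‖z‖^2*‖w‖^2) : ℝ) : ℂ) * (X * (starRingEnd ℂ) X)).re := by
    rw [Complex.mul_conj, ← Complex.ofReal_mul, Complex.ofReal_re]
    congr 1
    rw [Complex.normSq_eq_norm_sq]
  rw [hRHS]
  congr 1
  have hcast : ((‖z‖^(2*a) * ‖w‖^(2*b) / (‖z‖^2*‖w‖^2) : ℝ) : ℂ)
      = (z^a * (starRingEnd ℂ) z^a) * (w^b * (starRingEnd ℂ) w^b) / ((z * (starRingEnd ℂ) z) * (w * (starRingEnd ℂ) w)) := by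
    push_cast
    rw [show ((‖z‖:ℂ))^(2*a) = ((‖z‖:ℂ)^2)^a by rw [← pow_mul],
        show ((‖w‖:ℂ))^(2*b) = ((‖w‖:ℂ)^2)^b by rw [← pow_mul]]
    have h1 : ((‖z‖:ℂ))^2 = z * (starRingEnd ℂ) z := by
      rw [Complex.mul_conj]; norm_cast; rw [Complex.normSq_eq_norm_sq]
    have h2 : ((‖w‖:ℂ))^2 = w * (starRingEnd ℂ) w := by
      rw [Complex.mul_conj]; norm_cast; rw [Complex.normSq_eq_norm_sq]
    rw [h1, h2, mul_pow, mul_pow]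
  rw [hcast, hXdef]
  simp only [map_add, map_mul, Complex.conj_natCast]
  rcases Nat.eq_zero_or_pos a with ha | ha
  · rcases Nat.eq_zero_or_pos b with hb | hb
    · subst ha; subst hb; simp
    · obtain ⟨b', rfl⟩ : ∃ b', b = b' + 1 := ⟨b - 1, (Nat.succ_pred_eq_of_pos hb).symm⟩
      subst ha
      simp only [Nat.add_sub_cancel, Nat.cast_zero, pow_zero]
      field_simp
      ring
  · obtain ⟨a', rfl⟩ : ∃ a', a = a' + 1 := ⟨a - 1, (Nat.succ_pred_eq_of_pos ha).symm⟩
    rcases Nat.eq_zero_or_pos b with hb | hb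
    · subst hb
      simp only [Nat.add_sub_cancel, Nat.cast_zero, pow_zero]
      field_simp
      ring
    · obtain ⟨b', rfl⟩ : ∃ b', b = b' + 1 := ⟨b - 1, (Nat.succ_pred_eq_of_pos hb).symm⟩
      simp only [Nat.add_sub_cancel]
      field_simp
      ring

lemma hessForm_eq (Γ : Finset (ℕ × ℕ)) (p : ℂ × ℂ) (hz : p.1 ≠ 0) (hw : p.2 ≠ 0) (v : ℂ × ℂ) :
    hessForm Γ p v = ∑ q ∈ Γ,
      (‖p.1‖^(2*q.1) * ‖p.2‖^(2*q.2) / (‖p.1‖^2*‖p.2‖^2)) * ‖(q.1:ℂ)*p.2*v.1 + (q.2:ℂ)*p.1*v.2‖^2 := by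
  have hd1 : dz (psi1 Γ) p = ∑ q ∈ Γ, (q.1 : ℂ) * ((q.1 : ℂ) * p.1 ^ (q.1 - 1) * (starRingEnd ℂ) p.1 ^ (q.1 - 1) * p.2 ^ q.2 * (starRingEnd ℂ) p.2 ^ q.2) :=
    dz_of_wirt (hasFDerivAt_psi1 Γ p)
  have hd2 : dz (psi2 Γ) p = ∑ q ∈ Γ, (q.2 : ℂ) * ((q.1 : ℂ) * p.1 ^ (q.1 - 1) * (starRingEnd ℂ) p.1 ^ q.1 * p.2 ^ q.2 * (starRingEnd ℂ) p.2 ^ (q.2 - 1)) :=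
    dz_of_wirt (hasFDerivAt_psi2 Γ p)
  have hd3 : dw (psi1 Γ) p = ∑ q ∈ Γ, (q.1 : ℂ) * ((q.2 : ℂ) * p.1 ^ q.1 * (starRingEnd ℂ) p.1 ^ (q.1 - 1) * p.2 ^ (q.2 - 1) * (starRingEnd ℂ) p.2 ^ q.2) :=
    dw_of_wirt (hasFDerivAt_psi1 Γ p)
  have hd4 : dw (psi2 Γ) p = ∑ q ∈ Γ, (q.2 : ℂ) * ((q.2 : ℂ) * p.1 ^ q.1 * (starRingEnd ℂ) p.1 ^ q.1 * p.2 ^ (q.2 - 1) * (starRingEnd ℂ) p.2 ^ (q.2 - 1)) :=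
    dw_of_wirt (hasFDerivAt_psi2 Γ p)
  simp only [hessForm]
  rw [phiC_eq, dzbar_phiC, dwbar_phiC, hd1, hd2, hd3, hd4]
  simp only [Finset.sum_mul]
  rw [← Finset.sum_add_distrib, ← Finset.sum_add_distrib, ← Finset.sum_add_distrib]
  rw [Complex.re_sum]
  exact Finset.sum_congr rfl fun q _ => term_eq q.1 q.2 p.1 p.2 v.1 v.2 hz hw
open Complex

lemma quadPSD (x y P Q R : ℝ) (hP : 0 ≤ P) (hQ : 0 ≤ Q) (hR : R^2 ≤ P*Q) :
    0 ≤ x^2*Q + y^2*P + 2*(x*y)*R := by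
  rcases eq_or_lt_of_le hQ with h | h
  · have hR0 : R = 0 := by nlinarith [sq_nonneg R]
    rw [hR0, ← h]
    nlinarith [mul_nonneg (sq_nonneg y) hP]
  · nlinarith [sq_nonneg (x*Q + y*R), mul_nonneg (sq_nonneg y) (sub_nonneg.mpr hR), h]

lemma normsq_c (u : ℂ) : ‖u‖^2 = Complex.normSq u := by
  rw [Complex.normSq_eq_norm_sq]

lemma norm_sub_sq_c (x y : ℂ) :
    ‖x - y‖^2 = ‖x‖^2 + ‖y‖^2 - 2*((x * (starRingEnd ℂ) y).re) := by
  simp only [normsq_c, Complex.normSq_apply, Complex.sub_re, Complex.sub_im,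
    Complex.mul_re, Complex.conj_re, Complex.conj_im]
  ring

lemma resq_le (x y : ℂ) : ((x * (starRingEnd ℂ) y).re)^2 ≤ ‖x‖^2*‖y‖^2 := by
  have h1 : |(x * (starRingEnd ℂ) y).re| ≤ ‖x * (starRingEnd ℂ) y‖ := Complex.abs_re_le_norm _
  have h2 : ‖x * (starRingEnd ℂ) y‖ = ‖x‖ * ‖y‖ := by
    rw [norm_mul, RCLike.norm_conj]
  nlinarith [abs_nonneg ((x * (starRingEnd ℂ) y).re), _root_.sq_abs ((x * (starRingEnd ℂ) y).re)]

lemma norm_smul_c (r : ℝ) (u : ℂ) : ‖(r:ℂ) * u‖^2 = r^2 * ‖u‖^2 := by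
  rw [norm_mul, Complex.norm_real, Real.norm_eq_abs, mul_pow, _root_.sq_abs]

lemma re_swap (x y : ℂ) : (y * (starRingEnd ℂ) x).re = (x * (starRingEnd ℂ) y).re := by
  simp only [Complex.mul_re, Complex.conj_re, Complex.conj_im]
  ring

set_option maxHeartbeats 800000 in
lemma pair_ineq (α β γ δ Kp Kq : ℝ) (hKp : 0 ≤ Kp) (hKq : 0 ≤ Kq) (z w v1 v2 : ℂ) :
    (α*δ - β*γ)^2 * Kp * Kq * ‖z‖^2 * ‖w‖^2 * (‖v1‖^2 + ‖v2‖^2)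
      ≤ (Kp*(α^2*‖w‖^2 + β^2*‖z‖^2) + Kq*(γ^2*‖w‖^2 + δ^2*‖z‖^2))
        * (Kp * ‖(α:ℂ)*w*v1 + (β:ℂ)*z*v2‖^2 + Kq * ‖(γ:ℂ)*w*v1 + (δ:ℂ)*z*v2‖^2) := by
  have key1 : ∀ (r s : ℝ) (Xp Xq : ℂ), (r:ℂ)*Xp - (s:ℂ)*Xq = ((α*δ - β*γ : ℝ):ℂ)*w*v1 →
      (α*δ - β*γ)^2 * ‖w‖^2 * ‖v1‖^2
        = r^2*‖Xp‖^2 + s^2*‖Xq‖^2 - 2*(r*s)*((Xp * (starRingEnd ℂ) Xq).re) := by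
    intro r s Xp Xq hc
    have h1 : ‖(r:ℂ)*Xp - (s:ℂ)*Xq‖^2
        = r^2*‖Xp‖^2 + s^2*‖Xq‖^2 - 2*(r*s)*((Xp * (starRingEnd ℂ) Xq).re) := by
      rw [norm_sub_sq_c, norm_smul_c, norm_smul_c]
      have e : ((r:ℂ)*Xp) * (starRingEnd ℂ) ((s:ℂ)*Xq) = ((r*s:ℝ):ℂ) * (Xp * (starRingEnd ℂ) Xq) := by
        simp only [map_mul, Complex.conj_ofReal]; push_cast; ring
      rw [e, Complex.re_ofReal_mul]; ring
    rw [← h1, hc]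
    rw [show ((α*δ - β*γ : ℝ):ℂ)*w*v1 = ((α*δ - β*γ : ℝ):ℂ)*(w*v1) from mul_assoc _ _ _,
      norm_smul_c, norm_mul, mul_pow]
    ring
  set Xp := (α:ℂ)*w*v1 + (β:ℂ)*z*v2 with hXp
  set Xq := (γ:ℂ)*w*v1 + (δ:ℂ)*z*v2 with hXq
  have hcP : (δ:ℂ)*Xp - (β:ℂ)*Xq = ((α*δ - β*γ : ℝ):ℂ)*w*v1 := by
    rw [hXp, hXq]; push_cast; ring
  have hcQ : (α:ℂ)*Xq - (γ:ℂ)*Xp = ((α*δ - β*γ : ℝ):ℂ)*z*v2 := by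
    rw [hXp, hXq]; push_cast; ring
  have h3 := key1 δ β Xp Xq hcP
  have key2 : ∀ (r s : ℝ) (Y1 Y2 : ℂ), (r:ℂ)*Y1 - (s:ℂ)*Y2 = ((α*δ - β*γ : ℝ):ℂ)*z*v2 →
      (α*δ - β*γ)^2 * ‖z‖^2 * ‖v2‖^2
        = r^2*‖Y1‖^2 + s^2*‖Y2‖^2 - 2*(r*s)*((Y1 * (starRingEnd ℂ) Y2).re) := by
    intro r s Y1 Y2 hc
    have h1 : ‖(r:ℂ)*Y1 - (s:ℂ)*Y2‖^2
        = r^2*‖Y1‖^2 + s^2*‖Y2‖^2 - 2*(r*s)*((Y1 * (starRingEnd ℂ) Y2).re) := by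
      rw [norm_sub_sq_c, norm_smul_c, norm_smul_c]
      have e : ((r:ℂ)*Y1) * (starRingEnd ℂ) ((s:ℂ)*Y2) = ((r*s:ℝ):ℂ) * (Y1 * (starRingEnd ℂ) Y2) := by
        simp only [map_mul, Complex.conj_ofReal]; push_cast; ring
      rw [e, Complex.re_ofReal_mul]; ring
    rw [← h1, hc]
    rw [show ((α*δ - β*γ : ℝ):ℂ)*z*v2 = ((α*δ - β*γ : ℝ):ℂ)*(z*v2) from mul_assoc _ _ _,
      norm_smul_c, norm_mul, mul_pow]
    ring
  have h4 := key2 α γ Xq Xp hcQ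
  rw [re_swap Xp Xq] at h4
  set P := ‖Xp‖^2 with hP'
  set Q := ‖Xq‖^2 with hQ'
  set R := (Xp * (starRingEnd ℂ) Xq).re with hR'
  have hP : 0 ≤ P := by positivity
  have hQ : 0 ≤ Q := by positivity
  have hR : R^2 ≤ P*Q := resq_le _ _
  clear_value Xp Xq P Q R
  have S1 : (α*δ - β*γ)^2 * Kp * Kq * ‖w‖^2 * ‖v1‖^2
      ≤ (Kp*β^2 + Kq*δ^2) * (Kp*P + Kq*Q) := by
    have lhs_eq : (α*δ - β*γ)^2 * Kp * Kq * ‖w‖^2 * ‖v1‖^2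
        = Kp*Kq*(δ^2*P + β^2*Q - 2*(δ*β)*R) := by
      rw [show (α*δ - β*γ)^2 * Kp * Kq * ‖w‖^2 * ‖v1‖^2
          = Kp*Kq*((α*δ - β*γ)^2 * ‖w‖^2 * ‖v1‖^2) from by ring, h3]
    rw [lhs_eq]
    nlinarith [quadPSD (δ*Kq) (β*Kp) P Q R hP hQ hR]
  have S2 : (α*δ - β*γ)^2 * Kp * Kq * ‖z‖^2 * ‖v2‖^2
      ≤ (Kp*α^2 + Kq*γ^2) * (Kp*P + Kq*Q) := by
    have lhs_eq : (α*δ - β*γ)^2 * Kp * Kq * ‖z‖^2 * ‖v2‖^2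
        = Kp*Kq*(α^2*Q + γ^2*P - 2*(α*γ)*R) := by
      rw [show (α*δ - β*γ)^2 * Kp * Kq * ‖z‖^2 * ‖v2‖^2
          = Kp*Kq*((α*δ - β*γ)^2 * ‖z‖^2 * ‖v2‖^2) from by ring, h4]
    rw [lhs_eq]
    nlinarith [quadPSD (α*Kp) (γ*Kq) Q P R hQ hP (by nlinarith)]
  have m1 := mul_le_mul_of_nonneg_left S1 (pow_nonneg (norm_nonneg z) 2)
  have m2 := mul_le_mul_of_nonneg_left S2 (pow_nonneg (norm_nonneg w) 2)
  nlinarith [m1, m2]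

lemma hess_nonneg_term (Γ : Finset (ℕ × ℕ)) (p : ℂ × ℂ) (v : ℂ × ℂ) (q : ℕ × ℕ) :
    0 ≤ (‖p.1‖^(2*q.1) * ‖p.2‖^(2*q.2) / (‖p.1‖^2*‖p.2‖^2)) * ‖(q.1:ℂ)*p.2*v.1 + (q.2:ℂ)*p.1*v.2‖^2 := by
  positivity

lemma lam_ge (Γ : Finset (ℕ × ℕ)) (p : ℂ × ℂ) (lb : ℝ)
    (h : ∀ v : ℂ × ℂ, v ≠ 0 → lb * (‖v.1‖^2 + ‖v.2‖^2) ≤ hessForm Γ p v) :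
    lb ≤ lamGamma Γ p := by
  apply le_csInf
  · exact ⟨hessForm Γ p (1,0) / (‖((1:ℂ),(0:ℂ)).1‖^2 + ‖((1:ℂ),(0:ℂ)).2‖^2),
      (1,0), by norm_num [Prod.ext_iff], rfl⟩
  · rintro r ⟨v, hv, rfl⟩
    have h1 : v.1 ≠ 0 ∨ v.2 ≠ 0 := by
      by_contra hcon; push_neg at hcon
      exact hv (Prod.ext hcon.1 hcon.2)
    have hden : 0 < ‖v.1‖^2 + ‖v.2‖^2 := by
      rcases h1 with h1 | h1
      · have : 0 < ‖v.1‖^2 := pow_pos (norm_pos_iff.mpr h1) 2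
        nlinarith [sq_nonneg ‖v.2‖]
      · have : 0 < ‖v.2‖^2 := pow_pos (norm_pos_iff.mpr h1) 2
        nlinarith [sq_nonneg ‖v.1‖]
    rw [le_div_iff₀ hden]
    exact h v hv

lemma lam_pair (Γ : Finset (ℕ × ℕ)) (z w : ℂ) (hz : z ≠ 0) (hw : w ≠ 0)
    (P Q : ℕ × ℕ) (hP : P ∈ Γ) (hQ : Q ∈ Γ) (hPQ : P ≠ Q) (lb : ℝ)
    (hT : 0 < ‖z‖^(2*P.1) * ‖w‖^(2*P.2) * ((P.1:ℝ)^2*‖w‖^2 + (P.2:ℝ)^2*‖z‖^2)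
        + ‖z‖^(2*Q.1) * ‖w‖^(2*Q.2) * ((Q.1:ℝ)^2*‖w‖^2 + (Q.2:ℝ)^2*‖z‖^2))
    (hkey : lb * (‖z‖^(2*P.1) * ‖w‖^(2*P.2) * ((P.1:ℝ)^2*‖w‖^2 + (P.2:ℝ)^2*‖z‖^2)
        + ‖z‖^(2*Q.1) * ‖w‖^(2*Q.2) * ((Q.1:ℝ)^2*‖w‖^2 + (Q.2:ℝ)^2*‖z‖^2))
      ≤ ((P.1:ℝ)*(Q.2:ℝ) - (P.2:ℝ)*(Q.1:ℝ))^2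
        * (‖z‖^(2*P.1) * ‖w‖^(2*P.2)) * (‖z‖^(2*Q.1) * ‖w‖^(2*Q.2))) :
    lb ≤ lamGamma Γ (z, w) := by
  have hz0 : ‖z‖ ≠ 0 := norm_ne_zero_iff.mpr hz
  have hw0 : ‖w‖ ≠ 0 := norm_ne_zero_iff.mpr hw
  have hD : (0:ℝ) < ‖z‖^2*‖w‖^2 := by
    have h1 : 0 < ‖z‖ := norm_pos_iff.mpr hz
    have h2 : 0 < ‖w‖ := norm_pos_iff.mpr hw
    positivity
  set KP := ‖z‖^(2*P.1) * ‖w‖^(2*P.2) / (‖z‖^2*‖w‖^2) with hKP'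
  set KQ := ‖z‖^(2*Q.1) * ‖w‖^(2*Q.2) / (‖z‖^2*‖w‖^2) with hKQ'
  have hKP : 0 ≤ KP := by positivity
  have hKQ : 0 ≤ KQ := by positivity
  have eT : KP * ((P.1:ℝ)^2*‖w‖^2 + (P.2:ℝ)^2*‖z‖^2) + KQ * ((Q.1:ℝ)^2*‖w‖^2 + (Q.2:ℝ)^2*‖z‖^2)
      = (‖z‖^(2*P.1) * ‖w‖^(2*P.2) * ((P.1:ℝ)^2*‖w‖^2 + (P.2:ℝ)^2*‖z‖^2)
        + ‖z‖^(2*Q.1) * ‖w‖^(2*Q.2) * ((Q.1:ℝ)^2*‖w‖^2 + (Q.2:ℝ)^2*‖z‖^2)) / (‖z‖^2*‖w‖^2) := by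
    rw [hKP', hKQ']; ring
  have eR : ((P.1:ℝ)*(Q.2:ℝ) - (P.2:ℝ)*(Q.1:ℝ))^2 * KP * KQ * ‖z‖^2 * ‖w‖^2
      = (((P.1:ℝ)*(Q.2:ℝ) - (P.2:ℝ)*(Q.1:ℝ))^2
        * (‖z‖^(2*P.1) * ‖w‖^(2*P.2)) * (‖z‖^(2*Q.1) * ‖w‖^(2*Q.2))) / (‖z‖^2*‖w‖^2) := by
    rw [hKP', hKQ']
    have e0 : (‖z‖^2*‖w‖^2) / ((‖z‖^2*‖w‖^2)*(‖z‖^2*‖w‖^2)) = 1/(‖z‖^2*‖w‖^2) := by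
      rw [div_eq_div_iff (by positivity) hD.ne']; ring
    calc ((P.1:ℝ)*(Q.2:ℝ) - (P.2:ℝ)*(Q.1:ℝ))^2 * (‖z‖^(2*P.1) * ‖w‖^(2*P.2) / (‖z‖^2*‖w‖^2))
          * (‖z‖^(2*Q.1) * ‖w‖^(2*Q.2) / (‖z‖^2*‖w‖^2)) * ‖z‖^2 * ‖w‖^2
        = (((P.1:ℝ)*(Q.2:ℝ) - (P.2:ℝ)*(Q.1:ℝ))^2 * (‖z‖^(2*P.1) * ‖w‖^(2*P.2)) * (‖z‖^(2*Q.1) * ‖w‖^(2*Q.2)))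
          * ((‖z‖^2*‖w‖^2) / ((‖z‖^2*‖w‖^2)*(‖z‖^2*‖w‖^2))) := by ring
      _ = (((P.1:ℝ)*(Q.2:ℝ) - (P.2:ℝ)*(Q.1:ℝ))^2 * (‖z‖^(2*P.1) * ‖w‖^(2*P.2)) * (‖z‖^(2*Q.1) * ‖w‖^(2*Q.2)))
          * (1/(‖z‖^2*‖w‖^2)) := by rw [e0]
      _ = _ := by ring
  have hTold : 0 < KP * ((P.1:ℝ)^2*‖w‖^2 + (P.2:ℝ)^2*‖z‖^2)
      + KQ * ((Q.1:ℝ)^2*‖w‖^2 + (Q.2:ℝ)^2*‖z‖^2) := by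
    rw [eT]; exact div_pos hT hD
  have hkeyold : lb * (KP * ((P.1:ℝ)^2*‖w‖^2 + (P.2:ℝ)^2*‖z‖^2)
      + KQ * ((Q.1:ℝ)^2*‖w‖^2 + (Q.2:ℝ)^2*‖z‖^2))
      ≤ ((P.1:ℝ)*(Q.2:ℝ) - (P.2:ℝ)*(Q.1:ℝ))^2 * KP * KQ * ‖z‖^2 * ‖w‖^2 := by
    rw [eT, eR, ← mul_div_assoc]
    exact (div_le_div_iff_of_pos_right hD).mpr hkey
  apply lam_ge
  intro v hv
  have hform : KP * ‖(P.1:ℂ)*w*v.1 + (P.2:ℂ)*z*v.2‖^2 + KQ * ‖(Q.1:ℂ)*w*v.1 + (Q.2:ℂ)*z*v.2‖^2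
      ≤ hessForm Γ (z, w) v := by
    rw [hessForm_eq Γ (z, w) hz hw v]
    have hsub : ({P, Q} : Finset (ℕ × ℕ)) ⊆ Γ := by
      intro x hx
      rcases Finset.mem_insert.mp hx with rfl | hx
      · exact hP
      · rw [Finset.mem_singleton.mp hx]; exact hQ
    calc KP * ‖(P.1:ℂ)*w*v.1 + (P.2:ℂ)*z*v.2‖^2 + KQ * ‖(Q.1:ℂ)*w*v.1 + (Q.2:ℂ)*z*v.2‖^2
        = ∑ q ∈ ({P, Q} : Finset (ℕ × ℕ)),
            (‖z‖^(2*q.1) * ‖w‖^(2*q.2) / (‖z‖^2*‖w‖^2)) * ‖(q.1:ℂ)*w*v.1 + (q.2:ℂ)*z*v.2‖^2 := by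
          rw [Finset.sum_pair hPQ]
      _ ≤ ∑ q ∈ Γ, (‖z‖^(2*q.1) * ‖w‖^(2*q.2) / (‖z‖^2*‖w‖^2)) * ‖(q.1:ℂ)*w*v.1 + (q.2:ℂ)*z*v.2‖^2 :=
          Finset.sum_le_sum_of_subset_of_nonneg hsub (fun i _ _ => by positivity)
  have hpi := pair_ineq (P.1:ℝ) (P.2:ℝ) (Q.1:ℝ) (Q.2:ℝ) KP KQ hKP hKQ z w v.1 v.2
  simp only [Complex.ofReal_natCast] at hpi
  have hvn : 0 ≤ ‖v.1‖^2 + ‖v.2‖^2 := by positivity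
  have goal_mul : (KP * ((P.1:ℝ)^2*‖w‖^2 + (P.2:ℝ)^2*‖z‖^2) + KQ * ((Q.1:ℝ)^2*‖w‖^2 + (Q.2:ℝ)^2*‖z‖^2))
      * (lb * (‖v.1‖^2 + ‖v.2‖^2))
      ≤ (KP * ((P.1:ℝ)^2*‖w‖^2 + (P.2:ℝ)^2*‖z‖^2) + KQ * ((Q.1:ℝ)^2*‖w‖^2 + (Q.2:ℝ)^2*‖z‖^2))
      * (KP * ‖(P.1:ℂ)*w*v.1 + (P.2:ℂ)*z*v.2‖^2 + KQ * ‖(Q.1:ℂ)*w*v.1 + (Q.2:ℂ)*z*v.2‖^2) := by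
    calc (KP * ((P.1:ℝ)^2*‖w‖^2 + (P.2:ℝ)^2*‖z‖^2) + KQ * ((Q.1:ℝ)^2*‖w‖^2 + (Q.2:ℝ)^2*‖z‖^2))
        * (lb * (‖v.1‖^2 + ‖v.2‖^2))
        = (lb * (KP * ((P.1:ℝ)^2*‖w‖^2 + (P.2:ℝ)^2*‖z‖^2) + KQ * ((Q.1:ℝ)^2*‖w‖^2 + (Q.2:ℝ)^2*‖z‖^2)))
          * (‖v.1‖^2 + ‖v.2‖^2) := by ring
      _ ≤ (((P.1:ℝ)*(Q.2:ℝ) - (P.2:ℝ)*(Q.1:ℝ))^2 * KP * KQ * ‖z‖^2 * ‖w‖^2) * (‖v.1‖^2 + ‖v.2‖^2) :=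
          mul_le_mul_of_nonneg_right hkeyold hvn
      _ = ((P.1:ℝ)*(Q.2:ℝ) - (P.2:ℝ)*(Q.1:ℝ))^2 * KP * KQ * ‖z‖^2 * ‖w‖^2 * (‖v.1‖^2 + ‖v.2‖^2) := by
          ring
      _ ≤ _ := by
          convert hpi using 2 <;> ring
  have := le_of_mul_le_mul_left goal_mul hTold
  linarith [hform]

lemma factR1 (s t σ : ℝ) (A B : ℕ) (hB : 1 ≤ B) (hs0 : 0 < s) (ht0 : 0 < t)
    (hσ : (A:ℝ) = σ * B) (hst : 1 ≤ s^σ * t) :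
    s^(2*σ) * t^2 ≤ (B:ℝ)^2 * (s^(2*A)*t^(2*B)) := by
  have hB1 : (1:ℝ) ≤ (B:ℝ) := by exact_mod_cast hB
  have h1 : s^(2*σ) * t^2 * 1 ≤ s^(2*σ) * t^2 * (s^σ*t)^(2*(B:ℝ)-2) := by
    apply mul_le_mul_of_nonneg_left ?_ (by positivity)
    calc (1:ℝ) = (s^σ*t)^(0:ℝ) := (Real.rpow_zero _).symm
      _ ≤ (s^σ*t)^(2*(B:ℝ)-2) := Real.rpow_le_rpow_of_exponent_le hst (by linarith)
  have h2 : s^(2*σ) * t^2 * (s^σ*t)^(2*(B:ℝ)-2) = s^(2*A)*t^(2*B) := by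
    rw [Real.mul_rpow (by positivity) (by positivity), ← Real.rpow_mul hs0.le]
    rw [show (t:ℝ)^2 = t^(2:ℝ) from by rw [← Real.rpow_natCast t 2]; norm_num]
    rw [show s^(2*σ) * t^(2:ℝ) * (s^(σ*(2*(B:ℝ)-2)) * t^(2*(B:ℝ)-2))
        = (s^(2*σ) * s^(σ*(2*(B:ℝ)-2))) * (t^(2:ℝ) * t^(2*(B:ℝ)-2)) from by ring]
    rw [← Real.rpow_add hs0, ← Real.rpow_add ht0]
    rw [show 2*σ + σ*(2*(B:ℝ)-2) = 2*(A:ℝ) from by rw [hσ]; ring,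
        show (2:ℝ) + (2*(B:ℝ)-2) = 2*(B:ℝ) from by ring]
    rw [show (2*(A:ℝ)) = ((2*A : ℕ):ℝ) from by push_cast; ring,
        show (2*(B:ℝ)) = ((2*B : ℕ):ℝ) from by push_cast; ring,
        Real.rpow_natCast, Real.rpow_natCast]
  calc s^(2*σ) * t^2 = s^(2*σ) * t^2 * 1 := by ring
    _ ≤ s^(2*σ) * t^2 * (s^σ*t)^(2*(B:ℝ)-2) := h1
    _ = s^(2*A)*t^(2*B) := h2
    _ ≤ (B:ℝ)^2 * (s^(2*A)*t^(2*B)) := by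
        apply le_mul_of_one_le_left (by positivity)
        nlinarith

lemma factR2 (s t σ : ℝ) (m : ℕ) (hs1 : 1 ≤ s) (ht0 : 0 < t)
    (hcase : t ≤ s^((m:ℝ) - σ)) : s^(2*σ) * t^2 ≤ s^(2*m) := by
  have hs0 : (0:ℝ) < s := lt_of_lt_of_le one_pos hs1
  have h1 : t^2 ≤ (s^((m:ℝ)-σ))^2 := pow_le_pow_left₀ ht0.le hcase 2
  calc s^(2*σ) * t^2 ≤ s^(2*σ) * (s^((m:ℝ)-σ))^2 :=
        mul_le_mul_of_nonneg_left h1 (by positivity)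
    _ = s^(2*σ) * s^(((m:ℝ)-σ)*2) := by
        rw [← Real.rpow_natCast (s^((m:ℝ)-σ)) 2, ← Real.rpow_mul hs0.le]; norm_num
    _ = s^(2*σ + ((m:ℝ)-σ)*2) := (Real.rpow_add hs0 _ _).symm
    _ = s^((2*m : ℕ):ℝ) := by rw [show 2*σ + ((m:ℝ)-σ)*2 = ((2*m : ℕ):ℝ) from by push_cast; ring]
    _ = s^(2*m) := Real.rpow_natCast s (2*m)

lemma factR3 (s σ : ℝ) (m : ℕ) (hs1 : 1 ≤ s) (hσm : σ + 1 ≤ (m:ℝ)) :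
    s^(2*σ) * s^2 ≤ s^(2*m) := by
  have hs0 : (0:ℝ) < s := lt_of_lt_of_le one_pos hs1
  calc s^(2*σ) * s^2 = s^(2*σ) * s^((2:ℕ):ℝ) := by rw [Real.rpow_natCast]
    _ = s^(2*σ + 2) := by rw [← Real.rpow_add hs0]; norm_num
    _ ≤ s^((2*m : ℕ):ℝ) := Real.rpow_le_rpow_of_exponent_le hs1 (by push_cast; linarith)
    _ = s^(2*m) := Real.rpow_natCast s (2*m)

lemma factG1 (s t σ : ℝ) (m n : ℕ) (hs1 : 1 ≤ s) (ht0 : 0 < t) (hn2 : 2 ≤ n)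
    (hσn : σ * (n:ℝ) ≤ (m:ℝ) * ((n:ℝ) - 1)) (hσpos : 0 < σ) (hcase : s^((m:ℝ) - σ) ≤ t) :
    s^(2*σ) * t^2 ≤ t^(2*n) := by
  have hs0 : (0:ℝ) < s := lt_of_lt_of_le one_pos hs1
  have hn1 : (2:ℝ) ≤ (n:ℝ) := by exact_mod_cast hn2
  have h1 : s^(2*σ) ≤ t^(2*(n:ℝ)-2) := by
    calc s^(2*σ) ≤ s^(((m:ℝ)-σ)*(2*(n:ℝ)-2)) :=
          Real.rpow_le_rpow_of_exponent_le hs1 (by nlinarith)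
      _ = (s^((m:ℝ)-σ))^(2*(n:ℝ)-2) := Real.rpow_mul hs0.le _ _
      _ ≤ t^(2*(n:ℝ)-2) := Real.rpow_le_rpow (by positivity) hcase (by nlinarith)
  calc s^(2*σ) * t^2 ≤ t^(2*(n:ℝ)-2) * t^2 := mul_le_mul_of_nonneg_right h1 (by positivity)
    _ = t^(2*(n:ℝ)-2) * t^((2:ℕ):ℝ) := by rw [Real.rpow_natCast]
    _ = t^(2*(n:ℝ)-2+2) := (Real.rpow_add ht0 _ _).symm
    _ = t^((2*n : ℕ):ℝ) := by rw [show 2*(n:ℝ)-2+2 = ((2*n:ℕ):ℝ) from by push_cast; ring]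
    _ = t^(2*n) := Real.rpow_natCast t (2*n)

set_option maxHeartbeats 2000000 in
lemma core (Γ : Finset (ℕ × ℕ)) (m n A B : ℕ) (hm : (m,0) ∈ Γ) (hn : (0,n) ∈ Γ)
    (hq : (A,B) ∈ Γ) (hA : 1 ≤ A) (hB : 1 ≤ B) (hm1 : 1 ≤ m) (hn1 : 1 ≤ n)
    (hline : n * A + m * B = n * m) (σ : ℝ) (hσ : (A:ℝ) = σ * B) (z w : ℂ)
    (hz1 : 1 ≤ ‖z‖) (hst : 1 ≤ ‖z‖^σ * ‖w‖) (hw0 : w ≠ 0) :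
    (1/(3*(1+(A:ℝ)^2))) * ‖z‖^(2*σ) ≤ lamGamma Γ (z,w) := by
  have hz0 : z ≠ 0 := by
    intro h; rw [h, norm_zero] at hz1; linarith
  have hs0 : (0:ℝ) < ‖z‖ := lt_of_lt_of_le one_pos hz1
  have ht0 : (0:ℝ) < ‖w‖ := norm_pos_iff.mpr hw0
  -- integer facts
  have hAm : A < m := by
    have hmB : 0 < m*B := Nat.mul_pos hm1 hB
    have h2 : n*A < n*m := by omega
    exact Nat.lt_of_mul_lt_mul_left h2
  have hBn : B < n := by
    have hnA : 0 < n*A := Nat.mul_pos hn1 hA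
    have hline' : n*A + m*B = m*n := by rw [hline, Nat.mul_comm]
    have h2 : m*B < m*n := by omega
    exact Nat.lt_of_mul_lt_mul_left h2
  have hn2 : 2 ≤ n := by omega
  -- real facts
  have hAR : (1:ℝ) ≤ (A:ℝ) := by exact_mod_cast hA
  have hBR : (1:ℝ) ≤ (B:ℝ) := by exact_mod_cast hB
  have hmR : (1:ℝ) ≤ (m:ℝ) := by exact_mod_cast hm1
  have hnR : (2:ℝ) ≤ (n:ℝ) := by exact_mod_cast hn2
  have hσpos : 0 < σ := by nlinarith
  have hσA : σ ≤ (A:ℝ) := by nlinarith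
  have hσm : σ + 1 ≤ (m:ℝ) := by
    have : (A:ℝ) + 1 ≤ (m:ℝ) := by exact_mod_cast hAm
    linarith
  have hσn : σ * (n:ℝ) ≤ (m:ℝ) * ((n:ℝ) - 1) := by
    have hlineR : (n:ℝ)*(A:ℝ) + (m:ℝ)*(B:ℝ) = (n:ℝ)*(m:ℝ) := by exact_mod_cast hline
    have e0 : (n:ℝ)*(A:ℝ) = σ*(n:ℝ)*(B:ℝ) := by rw [hσ]; ring
    have h2 : (n:ℝ)*(m:ℝ)*1 ≤ (n:ℝ)*(m:ℝ)*(B:ℝ) :=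
      mul_le_mul_of_nonneg_left hBR (by positivity)
    have e1 : σ*(n:ℝ)*(B:ℝ) ≤ ((m:ℝ)*((n:ℝ)-1))*(B:ℝ) := by nlinarith
    have hB0 : (0:ℝ) < (B:ℝ) := by linarith
    exact le_of_mul_le_mul_right e1 hB0
  have hX0 : (0:ℝ) ≤ ‖z‖^(2*σ) := Real.rpow_nonneg hs0.le _
  have hm2 : (1:ℝ) ≤ (m:ℝ)^2 := by nlinarith
  have hn2sq : (1:ℝ) ≤ (n:ℝ)^2 := by nlinarith
  have hBsq : (1:ℝ) ≤ (B:ℝ)^2 := by nlinarith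
  have hmB1 : (1:ℝ) ≤ (m:ℝ)^2*(B:ℝ)^2 := by nlinarith [mul_le_mul hm2 hBsq zero_le_one (by positivity : (0:ℝ) ≤ (m:ℝ)^2)]
  have hc0 : (0:ℝ) < 3*(1+(A:ℝ)^2) := by positivity
  rcases le_or_gt ‖w‖ (‖z‖^((m:ℝ) - σ)) with hcase | hcase
  · -- Case 1 : pair (m,0) and (A,B)
    have R1 := factR1 ‖z‖ ‖w‖ σ A B hB hs0 ht0 hσ hst
    have R2 := factR2 ‖z‖ ‖w‖ σ m hz1 ht0 hcase
    have R3 := factR3 ‖z‖ σ m hz1 hσm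
    apply lam_pair Γ z w hz0 hw0 (m,0) (A,B) hm hq
      (by intro h; rw [Prod.mk.injEq] at h; omega)
    · -- hT
      have HT : (0:ℝ) < ‖z‖^(2*m) * ‖w‖^(2*0) * ((m:ℝ)^2*‖w‖^2 + ((0:ℕ):ℝ)^2*‖z‖^2)
          + ‖z‖^(2*A)*‖w‖^(2*B) * ((A:ℝ)^2*‖w‖^2 + (B:ℝ)^2*‖z‖^2) := by
        have hm0 : (0:ℝ) < (m:ℝ) := by linarith
        have h1 : (0:ℝ) < ‖z‖^(2*m) * ‖w‖^(2*0) * ((m:ℝ)^2*‖w‖^2 + ((0:ℕ):ℝ)^2*‖z‖^2) := by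
          apply mul_pos (by positivity)
          have : (0:ℝ) < (m:ℝ)^2*‖w‖^2 := by positivity
          nlinarith [sq_nonneg (((0:ℕ):ℝ)) , sq_nonneg ‖z‖]
        have h2 : (0:ℝ) ≤ ‖z‖^(2*A)*‖w‖^(2*B) * ((A:ℝ)^2*‖w‖^2 + (B:ℝ)^2*‖z‖^2) := by positivity
        linarith
      exact HT
    · -- hkey
      have HK : (1/(3*(1+(A:ℝ)^2))) * ‖z‖^(2*σ)
          * (‖z‖^(2*m) * ‖w‖^(2*0) * ((m:ℝ)^2*‖w‖^2 + ((0:ℕ):ℝ)^2*‖z‖^2)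
            + ‖z‖^(2*A)*‖w‖^(2*B) * ((A:ℝ)^2*‖w‖^2 + (B:ℝ)^2*‖z‖^2))
          ≤ ((m:ℝ)*(B:ℝ) - ((0:ℕ):ℝ)*(A:ℝ))^2
            * (‖z‖^(2*m) * ‖w‖^(2*0)) * (‖z‖^(2*A)*‖w‖^(2*B)) := by
        have e00 : ((0:ℕ):ℝ) = 0 := by norm_num
        rw [e00]
        rw [show (2*0 : ℕ) = 0 from rfl, pow_zero]
        set X := ‖z‖^(2*σ) with hX'
        set U := ‖z‖^(2*A)*‖w‖^(2*B) with hU'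
        set V := ‖z‖^(2*m) with hV'
        have hU0 : (0:ℝ) ≤ U := by positivity
        have hV0 : (0:ℝ) ≤ V := by positivity
        have p1 : (m:ℝ)^2*V*(X*‖w‖^2) ≤ (m:ℝ)^2*V*((B:ℝ)^2*U) :=
          mul_le_mul_of_nonneg_left R1 (by positivity)
        have p2 : (A:ℝ)^2*U*(X*‖w‖^2) ≤ (A:ℝ)^2*U*V :=
          mul_le_mul_of_nonneg_left R2 (by positivity)
        have p3 : (B:ℝ)^2*U*(X*‖z‖^2) ≤ (B:ℝ)^2*U*V :=
          mul_le_mul_of_nonneg_left R3 (by positivity)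
        have hcoef : (1/(3*(1+(A:ℝ)^2))) * ((m:ℝ)^2*(B:ℝ)^2 + (A:ℝ)^2 + (B:ℝ)^2)
            ≤ (m:ℝ)^2*(B:ℝ)^2 := by
          rw [div_mul_eq_mul_div, div_le_iff₀ hc0]
          nlinarith [sq_nonneg (A:ℝ), hmB1,
            mul_le_mul_of_nonneg_left hmB1 (sq_nonneg (A:ℝ)),
            mul_le_mul_of_nonneg_right hm2 (sq_nonneg (B:ℝ))]
        have hcoefUV := mul_le_mul_of_nonneg_right hcoef (mul_nonneg hU0 hV0)
        calc (1/(3*(1+(A:ℝ)^2))) * X * (V * 1 * ((m:ℝ)^2*‖w‖^2 + 0^2*‖z‖^2)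
              + U * ((A:ℝ)^2*‖w‖^2 + (B:ℝ)^2*‖z‖^2))
            = (1/(3*(1+(A:ℝ)^2))) * ((m:ℝ)^2*V*(X*‖w‖^2) + (A:ℝ)^2*U*(X*‖w‖^2)
              + (B:ℝ)^2*U*(X*‖z‖^2)) := by ring
          _ ≤ (1/(3*(1+(A:ℝ)^2))) * ((m:ℝ)^2*V*((B:ℝ)^2*U) + (A:ℝ)^2*U*V + (B:ℝ)^2*U*V) := by
              apply mul_le_mul_of_nonneg_left _ (by positivity)
              linarith
          _ = (1/(3*(1+(A:ℝ)^2))) * ((m:ℝ)^2*(B:ℝ)^2 + (A:ℝ)^2 + (B:ℝ)^2) * (U*V) := by ring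
          _ ≤ (m:ℝ)^2*(B:ℝ)^2 * (U*V) := hcoefUV
          _ = ((m:ℝ)*(B:ℝ) - 0*(A:ℝ))^2 * (V * 1) * U := by ring
      exact HK
  · -- Case 2 : pair (m,0) and (0,n)
    have G1 := factG1 ‖z‖ ‖w‖ σ m n hz1 ht0 hn2 hσn hσpos hcase.le
    have R3 := factR3 ‖z‖ σ m hz1 hσm
    apply lam_pair Γ z w hz0 hw0 (m,0) (0,n) hm hn
      (by intro h; rw [Prod.mk.injEq] at h; omega)
    · -- hT
      have HT : (0:ℝ) < ‖z‖^(2*m) * ‖w‖^(2*0) * ((m:ℝ)^2*‖w‖^2 + ((0:ℕ):ℝ)^2*‖z‖^2)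
          + ‖z‖^(2*0)*‖w‖^(2*n) * (((0:ℕ):ℝ)^2*‖w‖^2 + (n:ℝ)^2*‖z‖^2) := by
        have hm0 : (0:ℝ) < (m:ℝ) := by linarith
        have h1 : (0:ℝ) < ‖z‖^(2*m) * ‖w‖^(2*0) * ((m:ℝ)^2*‖w‖^2 + ((0:ℕ):ℝ)^2*‖z‖^2) := by
          apply mul_pos (by positivity)
          have : (0:ℝ) < (m:ℝ)^2*‖w‖^2 := by positivity
          nlinarith [sq_nonneg (((0:ℕ):ℝ)), sq_nonneg ‖z‖]
        have h2 : (0:ℝ) ≤ ‖z‖^(2*0)*‖w‖^(2*n) * (((0:ℕ):ℝ)^2*‖w‖^2 + (n:ℝ)^2*‖z‖^2) := by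
          positivity
        linarith
      exact HT
    · -- hkey
      have HK : (1/(3*(1+(A:ℝ)^2))) * ‖z‖^(2*σ)
          * (‖z‖^(2*m) * ‖w‖^(2*0) * ((m:ℝ)^2*‖w‖^2 + ((0:ℕ):ℝ)^2*‖z‖^2)
            + ‖z‖^(2*0)*‖w‖^(2*n) * (((0:ℕ):ℝ)^2*‖w‖^2 + (n:ℝ)^2*‖z‖^2))
          ≤ ((m:ℝ)*(n:ℝ) - ((0:ℕ):ℝ)*((0:ℕ):ℝ))^2
            * (‖z‖^(2*m) * ‖w‖^(2*0)) * (‖z‖^(2*0)*‖w‖^(2*n)) := by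
        have e00 : ((0:ℕ):ℝ) = 0 := by norm_num
        rw [e00]
        rw [show (2*0 : ℕ) = 0 from rfl, pow_zero, pow_zero]
        set X := ‖z‖^(2*σ) with hX'
        set U := ‖w‖^(2*n) with hU'
        set V := ‖z‖^(2*m) with hV'
        have hU0 : (0:ℝ) ≤ U := by positivity
        have hV0 : (0:ℝ) ≤ V := by positivity
        have p1 : (m:ℝ)^2*V*(X*‖w‖^2) ≤ (m:ℝ)^2*V*U :=
          mul_le_mul_of_nonneg_left G1 (by positivity)
        have p2 : (n:ℝ)^2*U*(X*‖z‖^2) ≤ (n:ℝ)^2*U*V :=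
          mul_le_mul_of_nonneg_left R3 (by positivity)
        have hcoef : (1/(3*(1+(A:ℝ)^2))) * ((m:ℝ)^2 + (n:ℝ)^2)
            ≤ (m:ℝ)^2*(n:ℝ)^2 := by
          rw [div_mul_eq_mul_div, div_le_iff₀ hc0]
          nlinarith [mul_le_mul_of_nonneg_left hn2sq (by positivity : (0:ℝ) ≤ (m:ℝ)^2),
            mul_le_mul_of_nonneg_left hm2 (by positivity : (0:ℝ) ≤ (n:ℝ)^2),
            sq_nonneg ((A:ℝ)), mul_le_mul hm2 hn2sq zero_le_one (by positivity : (0:ℝ) ≤ (m:ℝ)^2),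
            mul_le_mul_of_nonneg_left (mul_le_mul hm2 hn2sq zero_le_one (by positivity : (0:ℝ) ≤ (m:ℝ)^2)) (sq_nonneg (A:ℝ))]
        have hcoefUV := mul_le_mul_of_nonneg_right hcoef (mul_nonneg hU0 hV0)
        calc (1/(3*(1+(A:ℝ)^2))) * X * (V * 1 * ((m:ℝ)^2*‖w‖^2 + 0^2*‖z‖^2)
              + 1*U * (0^2*‖w‖^2 + (n:ℝ)^2*‖z‖^2))
            = (1/(3*(1+(A:ℝ)^2))) * ((m:ℝ)^2*V*(X*‖w‖^2) + (n:ℝ)^2*U*(X*‖z‖^2)) := by ring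
          _ ≤ (1/(3*(1+(A:ℝ)^2))) * ((m:ℝ)^2*V*U + (n:ℝ)^2*U*V) := by
              apply mul_le_mul_of_nonneg_left _ (by positivity)
              linarith
          _ = (1/(3*(1+(A:ℝ)^2))) * ((m:ℝ)^2 + (n:ℝ)^2) * (U*V) := by ring
          _ ≤ (m:ℝ)^2*(n:ℝ)^2 * (U*V) := hcoefUV
          _ = ((m:ℝ)*(n:ℝ) - 0*0)^2 * (V * 1) * (1*U) := by ring
      exact HK

lemma one_le_rpow' {x e : ℝ} (hx : 1 ≤ x) (he : 0 ≤ e) : 1 ≤ x^e := by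
  calc (1:ℝ) = x^(0:ℝ) := (Real.rpow_zero x).symm
    _ ≤ x^e := Real.rpow_le_rpow_of_exponent_le hx he

lemma one_le_base {x σ : ℝ} (hx : 0 ≤ x) (hσ : 0 < σ) (h : 1 ≤ x^σ) : 1 ≤ x := by
  by_contra hc
  push_neg at hc
  have := Real.rpow_lt_one hx hc hσ
  linarith

lemma rpow_two_eq {x : ℝ} (e : ℝ) (hx : 0 ≤ x) : x^(2*e) = (x^e)^2 := by
  rw [show 2*e = e*2 from by ring, Real.rpow_mul hx, ← Real.rpow_natCast (x^e) 2]
  norm_num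

lemma hess_swap (Γ : Finset (ℕ × ℕ)) (z w : ℂ) (hz : z ≠ 0) (hw : w ≠ 0) (v1 v2 : ℂ) :
    hessForm (Γ.image (fun q => (q.2, q.1))) (w, z) (v2, v1) = hessForm Γ (z, w) (v1, v2) := by
  rw [hessForm_eq _ (w, z) hw hz (v2, v1), hessForm_eq Γ (z, w) hz hw (v1, v2)]
  rw [Finset.sum_image (by intro a _ b _ h; rw [Prod.mk.injEq] at h; exact Prod.ext h.2 h.1)]
  refine Finset.sum_congr rfl fun q _ => ?_
  simp only
  rw [show ‖w‖^(2*q.2) * ‖z‖^(2*q.1) = ‖z‖^(2*q.1) * ‖w‖^(2*q.2) from mul_comm _ _,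
      show ‖w‖^2*‖z‖^2 = ‖z‖^2*‖w‖^2 from mul_comm _ _,
      add_comm ((q.2:ℂ)*z*v2) ((q.1:ℂ)*w*v1)]

lemma lam_swap (Γ : Finset (ℕ × ℕ)) (z w : ℂ) (hz : z ≠ 0) (hw : w ≠ 0) :
    lamGamma (Γ.image (fun q => (q.2, q.1))) (w, z) = lamGamma Γ (z, w) := by
  unfold lamGamma
  congr 1
  ext r
  constructor
  · rintro ⟨v, hv, rfl⟩
    refine ⟨(v.2, v.1), ?_, ?_⟩
    · intro h; rw [Prod.mk.injEq] at h; exact hv (Prod.ext h.2 h.1)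
    · have h := hess_swap Γ z w hz hw v.2 v.1
      simp only at h ⊢
      rw [← h, add_comm (‖v.2‖^2) (‖v.1‖^2)]
  · rintro ⟨v, hv, rfl⟩
    refine ⟨(v.2, v.1), ?_, ?_⟩
    · intro h; rw [Prod.mk.injEq] at h; exact hv (Prod.ext h.2 h.1)
    · have h := hess_swap Γ z w hz hw v.1 v.2
      simp only at h ⊢
      rw [h, add_comm (‖v.2‖^2) (‖v.1‖^2)]


set_option maxHeartbeats 1000000 in
/-- For a non-decoupled homogeneous model monomial weight, the least eigenvalue `λ_Γ` of
the complex Hessian satisfies `λ_Γ(z,w) ≳ |z|^{2σ} + |w|^{2τ}` on the region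
`E = {|z| ≥ 1, |w| ≥ |z|^{-σ}} ∪ {|w| ≥ 1, |z| ≥ |w|^{-τ}}`, where `σ = max α/β` and
`τ = max β/α` over mixed points of `Γ`. -/


theorem lambda_lower_bound_homogeneous (Γ : Finset (ℕ × ℕ)) (m n : ℕ)
    (hm : (m, 0) ∈ Γ) (hn : (0, n) ∈ Γ) (hm1 : 1 ≤ m) (hn1 : 1 ≤ n)
    (hhom : ∀ q ∈ Γ, n * q.1 + m * q.2 = n * m)
    (σ τ : ℝ)
    (hσub : ∀ q ∈ Γ, q.1 ≠ 0 → q.2 ≠ 0 → (q.1 : ℝ) ≤ σ * q.2)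
    (hσatt : ∃ q ∈ Γ, q.1 ≠ 0 ∧ q.2 ≠ 0 ∧ (q.1 : ℝ) = σ * q.2)
    (hτub : ∀ q ∈ Γ, q.1 ≠ 0 → q.2 ≠ 0 → (q.2 : ℝ) ≤ τ * q.1)
    (hτatt : ∃ q ∈ Γ, q.1 ≠ 0 ∧ q.2 ≠ 0 ∧ (q.2 : ℝ) = τ * q.1) :
    ∃ c : ℝ, 0 < c ∧ ∀ z w : ℂ,
      ((1 ≤ ‖z‖ ∧ ‖z‖ ^ (-σ) ≤ ‖w‖) ∨ (1 ≤ ‖w‖ ∧ ‖w‖ ^ (-τ) ≤ ‖z‖)) →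
      c * (‖z‖ ^ (2 * σ) + ‖w‖ ^ (2 * τ)) ≤ lamGamma Γ (z, w) := by
  obtain ⟨qσ, hqσΓ, hqσ1, hqσ2, hσeq⟩ := hσatt
  obtain ⟨qτ, hqτΓ, hqτ1, hqτ2, hτeq⟩ := hτatt
  have hA : 1 ≤ qσ.1 := Nat.one_le_iff_ne_zero.mpr hqσ1
  have hB : 1 ≤ qσ.2 := Nat.one_le_iff_ne_zero.mpr hqσ2
  have hA' : 1 ≤ qτ.1 := Nat.one_le_iff_ne_zero.mpr hqτ1
  have hB' : 1 ≤ qτ.2 := Nat.one_le_iff_ne_zero.mpr hqτ2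
  have hAR : (1:ℝ) ≤ (qσ.1:ℝ) := by exact_mod_cast hA
  have hBR : (1:ℝ) ≤ (qσ.2:ℝ) := by exact_mod_cast hB
  have hAR' : (1:ℝ) ≤ (qτ.1:ℝ) := by exact_mod_cast hA'
  have hBR' : (1:ℝ) ≤ (qτ.2:ℝ) := by exact_mod_cast hB'
  have hσpos : 0 < σ := by nlinarith
  have hτpos : 0 < τ := by nlinarith
  set c1 : ℝ := 1/(3*(1+(qσ.1:ℝ)^2)) with hc1'
  set c2 : ℝ := 1/(3*(1+(qτ.2:ℝ)^2)) with hc2'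
  have hc1 : 0 < c1 := by rw [hc1']; positivity
  have hc2 : 0 < c2 := by rw [hc2']; positivity
  have hcmin : 0 < min c1 c2 := lt_min hc1 hc2
  refine ⟨min c1 c2 / 2, by positivity, ?_⟩
  intro z w hE
  have hz0 : z ≠ 0 := by
    rcases hE with ⟨h1, _⟩ | ⟨h1, h2⟩
    · intro h; rw [h, norm_zero] at h1; linarith
    · intro h
      have hp : (0:ℝ) < ‖w‖^(-τ) := Real.rpow_pos_of_pos (lt_of_lt_of_le one_pos h1) _
      rw [h, norm_zero] at h2; linarith
  have hw0 : w ≠ 0 := by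
    rcases hE with ⟨h1, h2⟩ | ⟨h1, _⟩
    · intro h
      have hp : (0:ℝ) < ‖z‖^(-σ) := Real.rpow_pos_of_pos (lt_of_lt_of_le one_pos h1) _
      rw [h, norm_zero] at h2; linarith
    · intro h; rw [h, norm_zero] at h1; linarith
  have hXnn : (0:ℝ) ≤ ‖z‖^(2*σ) := Real.rpow_nonneg (norm_nonneg z) _
  have hTnn : (0:ℝ) ≤ ‖w‖^(2*τ) := Real.rpow_nonneg (norm_nonneg w) _
  rcases le_total (‖w‖^τ) (‖z‖^σ) with hcmp | hcmp
  · -- |z|^σ dominates : use `core` on Γ itself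
    have hz1 : 1 ≤ ‖z‖ := by
      rcases hE with ⟨h1, _⟩ | ⟨h1, _⟩
      · exact h1
      · have ht1 : (1:ℝ) ≤ ‖w‖^τ := one_le_rpow' h1 hτpos.le
        exact one_le_base (norm_nonneg z) hσpos (le_trans ht1 hcmp)
    have hs0 : (0:ℝ) < ‖z‖ := lt_of_lt_of_le one_pos hz1
    have hst : 1 ≤ ‖z‖^σ * ‖w‖ := by
      rcases hE with ⟨_, h2⟩ | ⟨h1, _⟩
      · have hp : (0:ℝ) ≤ ‖z‖^σ := Real.rpow_nonneg (norm_nonneg z) _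
        calc (1:ℝ) = ‖z‖^σ * ‖z‖^(-σ) := by
              rw [← Real.rpow_add hs0]; norm_num
          _ ≤ ‖z‖^σ * ‖w‖ := mul_le_mul_of_nonneg_left h2 hp
      · have hzs : (1:ℝ) ≤ ‖z‖^σ := one_le_rpow' hz1 hσpos.le
        nlinarith
    have hcore := core Γ m n qσ.1 qσ.2 hm hn hqσΓ hA hB hm1 hn1 (hhom qσ hqσΓ) σ hσeq
      z w hz1 hst hw0
    have htT : ‖w‖^(2*τ) ≤ ‖z‖^(2*σ) := by
      rw [rpow_two_eq τ (norm_nonneg w), rpow_two_eq σ (norm_nonneg z)]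
      exact pow_le_pow_left₀ (Real.rpow_nonneg (norm_nonneg w) _) hcmp 2
    have hmin1 : min c1 c2 * ‖z‖^(2*σ) ≤ c1 * ‖z‖^(2*σ) :=
      mul_le_mul_of_nonneg_right (min_le_left _ _) hXnn
    have e1 : min c1 c2/2*(‖z‖^(2*σ) + ‖w‖^(2*τ)) ≤ min c1 c2/2*(‖z‖^(2*σ) + ‖z‖^(2*σ)) :=
      mul_le_mul_of_nonneg_left (by linarith) (by positivity)
    linarith [e1, hmin1, hcore]
  · -- |w|^τ dominates : use `core` on the swapped Γ
    have ht1 : 1 ≤ ‖w‖ := by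
      rcases hE with ⟨h1, _⟩ | ⟨h1, _⟩
      · have hzs : (1:ℝ) ≤ ‖z‖^σ := one_le_rpow' h1 hσpos.le
        exact one_le_base (norm_nonneg w) hτpos (le_trans hzs hcmp)
      · exact h1
    have ht0 : (0:ℝ) < ‖w‖ := lt_of_lt_of_le one_pos ht1
    have hts : 1 ≤ ‖w‖^τ * ‖z‖ := by
      rcases hE with ⟨h1, _⟩ | ⟨_, h2⟩
      · have hws : (1:ℝ) ≤ ‖w‖^τ := one_le_rpow' ht1 hτpos.le
        nlinarith
      · have hp : (0:ℝ) ≤ ‖w‖^τ := Real.rpow_nonneg (norm_nonneg w) _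
        calc (1:ℝ) = ‖w‖^τ * ‖w‖^(-τ) := by
              rw [← Real.rpow_add ht0]; norm_num
          _ ≤ ‖w‖^τ * ‖z‖ := mul_le_mul_of_nonneg_left h2 hp
    have hline' : m * qτ.2 + n * qτ.1 = m * n := by
      have h := hhom qτ hqτΓ
      rw [Nat.mul_comm m n]
      omega
    have hmem1 : ((n:ℕ), (0:ℕ)) ∈ Γ.image (fun q : ℕ × ℕ => (q.2, q.1)) :=
      Finset.mem_image_of_mem _ hn
    have hmem2 : ((0:ℕ), (m:ℕ)) ∈ Γ.image (fun q : ℕ × ℕ => (q.2, q.1)) :=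
      Finset.mem_image_of_mem _ hm
    have hmem3 : (qτ.2, qτ.1) ∈ Γ.image (fun q : ℕ × ℕ => (q.2, q.1)) :=
      Finset.mem_image_of_mem _ hqτΓ
    have hcore := core (Γ.image (fun q : ℕ × ℕ => (q.2, q.1))) n m qτ.2 qτ.1
      hmem1 hmem2 hmem3 hB' hA' hn1 hm1 hline' τ hτeq w z ht1 hts hz0
    rw [lam_swap Γ z w hz0 hw0] at hcore
    have htT : ‖z‖^(2*σ) ≤ ‖w‖^(2*τ) := by
      rw [rpow_two_eq τ (norm_nonneg w), rpow_two_eq σ (norm_nonneg z)]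
      exact pow_le_pow_left₀ (Real.rpow_nonneg (norm_nonneg z) _) hcmp 2
    have hmin1 : min c1 c2 * ‖w‖^(2*τ) ≤ c2 * ‖w‖^(2*τ) :=
      mul_le_mul_of_nonneg_right (min_le_right _ _) hTnn
    have e1 : min c1 c2/2*(‖z‖^(2*σ) + ‖w‖^(2*τ)) ≤ min c1 c2/2*(‖w‖^(2*τ) + ‖w‖^(2*τ)) :=
      mul_le_mul_of_nonneg_left (by linarith) (by positivity)
    linarith [e1, hmin1, hcore]
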